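/- Let G = (V, E) be an undirected graph on V = {1,...,q}, let m ∈ ℕ, and for l = 1, ..., m let S_l be a q×q real symmetric positive definite matrix. Suppose for each l there exists a q×q matrix B_l that is the covariance selection of S_l with respect to G. Then for every tuple (Σ_1, ..., Σ_m) of q×q real symmetric positive definite matrices satisfying the graphical constraint ((Σ_l)⁻¹)_{ij} = 0 for all l and all pairs with i ≠ j and (i,j) ∉ E, one has Σ_{l=1}^m [ tr((Σ_l)⁻¹ S_l) + log det Σ_l ] ≥ Σ_{l=1}^m [ tr((B_l)⁻¹ S_l) + log det B_l ] = Σ_{l=1}^m [ q + log det B_l ], with equality if and only if Σ_l = B_l for every l = 1, ..., m. -/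

import Mathlib

open Finset

/-- `B` is the covariance selection (Dempster) of `A` with respect to the graph `G`:
`B` is positive definite, agrees with `A` on the diagonal and the edge set, and its
inverse vanishes off the diagonal and the edge set. -/
def IsCovSel {q : ℕ} (G : SimpleGraph (Fin q)) (A B : Matrix (Fin q) (Fin q) ℝ) : Prop :=
  B.PosDef ∧ (∀ i j, (i = j ∨ G.Adj i j) → B i j = A i j) ∧
    ∀ i j, i ≠ j → ¬ G.Adj i j → B⁻¹ i j = 0

namespace CovSelAux

open Matrix

variable {q : ℕ}

/-- Trace of a Hermitian real matrix equals the sum of its eigenvalues. -/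
lemma trace_eq_sum_eigenvalues {A : Matrix (Fin q) (Fin q) ℝ} (hA : A.IsHermitian) :
    A.trace = ∑ i, hA.eigenvalues i := by
  conv_lhs => rw [hA.spectral_theorem]
  rw [Unitary.conjStarAlgAut_apply, Matrix.trace_mul_cycle]
  rw [(Matrix.mem_unitaryGroup_iff').mp (hA.eigenvectorUnitary).2]
  simp [Matrix.trace_diagonal]

/-- Determinant of a Hermitian real matrix equals the product of its eigenvalues. -/
lemma det_eq_prod_eigenvalues' {A : Matrix (Fin q) (Fin q) ℝ} (hA : A.IsHermitian) :
    A.det = ∏ i, hA.eigenvalues i := by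
  simpa using hA.det_eq_prod_eigenvalues

/-- The key scalar inequality: for a positive definite matrix `M`,
`q + log det M ≤ tr M`, with equality iff `M = 1`. -/
lemma key {M : Matrix (Fin q) (Fin q) ℝ} (hM : M.PosDef) :
    (q : ℝ) + Real.log M.det ≤ M.trace ∧
      ((q : ℝ) + Real.log M.det = M.trace ↔ M = 1) := by
  have hH := hM.isHermitian
  have hpos : ∀ i, 0 < hH.eigenvalues i := hM.eigenvalues_pos
  have hdet : M.det = ∏ i, hH.eigenvalues i := det_eq_prod_eigenvalues' hH
  have htr : M.trace = ∑ i, hH.eigenvalues i := trace_eq_sum_eigenvalues hH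
  have hlog : Real.log M.det = ∑ i, Real.log (hH.eigenvalues i) := by
    rw [hdet, Real.log_prod]
    exact fun i _ => (hpos i).ne'
  have hterm : ∀ i : Fin q, 1 + Real.log (hH.eigenvalues i) ≤ hH.eigenvalues i := by
    intro i
    have := Real.log_le_sub_one_of_pos (hpos i)
    linarith
  have hsum : (q : ℝ) + Real.log M.det = ∑ i : Fin q, (1 + Real.log (hH.eigenvalues i)) := by
    rw [hlog, Finset.sum_add_distrib]
    simp
  constructor
  · rw [hsum, htr]
    exact Finset.sum_le_sum fun i _ => hterm i
  · constructor
    · intro heq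
      rw [hsum, htr] at heq
      have hall := (Finset.sum_eq_sum_iff_of_le (fun i _ => hterm i)).mp heq
      have hev1 : ∀ i, hH.eigenvalues i = 1 := by
        intro i
        by_contra hne
        have := Real.log_lt_sub_one_of_pos (hpos i) hne
        have h := hall i (Finset.mem_univ i)
        linarith
      -- spectral theorem: M = U * diagonal eigenvalues * U* = U * 1 * U* = 1
      have : Matrix.diagonal (RCLike.ofReal ∘ hH.eigenvalues) = (1 : Matrix (Fin q) (Fin q) ℝ) := by
        have hfun : (RCLike.ofReal ∘ hH.eigenvalues : Fin q → ℝ) = fun _ => 1 := by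
          funext i; simp [hev1 i]
        rw [hfun, Matrix.diagonal_one]
      calc M = _ := hH.spectral_theorem
        _ = 1 := by
            rw [this, Unitary.conjStarAlgAut_apply, mul_one]
            exact (Matrix.mem_unitaryGroup_iff).mp (hH.eigenvectorUnitary).2
    · rintro rfl
      simp [Matrix.trace_one]

/-- If `X` and `Y` agree wherever `P` is nonzero (transposed indices), traces agree. -/
lemma trace_congr {P X Y : Matrix (Fin q) (Fin q) ℝ}
    (h : ∀ i j, P i j ≠ 0 → X j i = Y j i) : (P * X).trace = (P * Y).trace := by
  rw [Matrix.trace, Matrix.trace]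
  apply Finset.sum_congr rfl
  intro i _
  rw [Matrix.diag_apply, Matrix.diag_apply, Matrix.mul_apply, Matrix.mul_apply]
  apply Finset.sum_congr rfl
  intro j _
  by_cases hp : P i j = 0
  · rw [hp, zero_mul, zero_mul]
  · rw [h i j hp]

open scoped MatrixOrder in
/-- Main per-matrix inequality. -/
lemma main_ineq {A B : Matrix (Fin q) (Fin q) ℝ} (hA : A.PosDef) (hB : B.PosDef) :
    (q : ℝ) + Real.log B.det ≤ (A⁻¹ * B).trace + Real.log A.det ∧
      ((A⁻¹ * B).trace + Real.log A.det = (q : ℝ) + Real.log B.det ↔ A = B) := by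
  have hP : (A⁻¹).PosDef := hA.inv
  set R := CFC.sqrt (A⁻¹) with hRdef
  have hRss : R * R = A⁻¹ := CFC.sqrt_mul_sqrt_self _ hP.posSemidef.nonneg
  have hRH : R.IsHermitian := (CFC.sqrt_nonneg (A⁻¹)).posSemidef.1
  have hdetA : 0 < A.det := hA.det_pos
  have hdetB : 0 < B.det := hB.det_pos
  have hdetP : 0 < (A⁻¹).det := hP.det_pos
  have hdetR : R.det ≠ 0 := by
    intro h0
    rw [← hRss, Matrix.det_mul, h0, mul_zero] at hdetP
    exact lt_irrefl _ hdetP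
  -- M := R * B * R is positive definite
  have hM : (R * B * R).PosDef := by
    refine Matrix.PosDef.of_dotProduct_mulVec_pos ?_ ?_
    · show (R * B * R)ᴴ = R * B * R
      rw [Matrix.conjTranspose_mul, Matrix.conjTranspose_mul, hRH.eq, hB.isHermitian.eq]
      rw [mul_assoc]
    · intro x hx
      have hRx : R *ᵥ x ≠ 0 := by
        intro h0
        apply hx
        have : R⁻¹ *ᵥ (R *ᵥ x) = x := by
          rw [Matrix.mulVec_mulVec, Matrix.nonsing_inv_mul _ (isUnit_iff_ne_zero.mpr hdetR),
            Matrix.one_mulVec]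
        rw [← this, h0, Matrix.mulVec_zero]
      have hq := hB.dotProduct_mulVec_pos hRx
      have : star x ⬝ᵥ (R * B * R) *ᵥ x = star (R *ᵥ x) ⬝ᵥ B *ᵥ (R *ᵥ x) := by
        rw [mul_assoc, ← Matrix.mulVec_mulVec, Matrix.dotProduct_mulVec, Matrix.star_mulVec,
          hRH.eq, Matrix.mulVec_mulVec]
      rw [this]
      exact hq
  have hMtr : (R * B * R).trace = (A⁻¹ * B).trace := by
    rw [Matrix.trace_mul_cycle, hRss]
  have hMdet : (R * B * R).det = (A⁻¹).det * B.det := by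
    rw [Matrix.det_mul, Matrix.det_mul, mul_comm, ← mul_assoc, ← Matrix.det_mul, hRss]
  have hdetPA : (A⁻¹).det = (A.det)⁻¹ := by
    rw [Matrix.det_nonsing_inv, Ring.inverse_eq_inv']
  have hlogM : Real.log (R * B * R).det = Real.log B.det - Real.log A.det := by
    rw [hMdet, Real.log_mul (ne_of_gt hdetP) (ne_of_gt hdetB), hdetPA, Real.log_inv]
    ring
  obtain ⟨hle, hiff⟩ := key hM
  constructor
  · rw [hlogM, hMtr] at hle
    linarith
  · constructor
    · intro heq
      have : (q : ℝ) + Real.log (R * B * R).det = (R * B * R).trace := by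
        rw [hlogM, hMtr]
        linarith
      have hM1 : R * B * R = 1 := hiff.mp this
      -- B = R⁻¹ * R⁻¹ = (R*R)⁻¹ = A
      have hRu : IsUnit R.det := isUnit_iff_ne_zero.mpr hdetR
      have h1 : R⁻¹ * (R * B * R) * R⁻¹ = B := by
        rw [← mul_assoc, ← mul_assoc, Matrix.nonsing_inv_mul _ hRu, one_mul, mul_assoc,
          Matrix.mul_nonsing_inv _ hRu, mul_one]
      rw [hM1] at h1
      have h2 : R⁻¹ * 1 * R⁻¹ = (R * R)⁻¹ := by
        rw [mul_one, Matrix.mul_inv_rev]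
      rw [h2, hRss, Matrix.nonsing_inv_nonsing_inv _ hA.det_pos.ne'.isUnit] at h1
      exact h1
    · rintro rfl
      have : A⁻¹ * A = 1 := Matrix.nonsing_inv_mul _ hA.det_pos.ne'.isUnit
      rw [this, Matrix.trace_one]
      simp

end CovSelAux

theorem stmt_2 (q m : ℕ) (G : SimpleGraph (Fin q))
    (S B : Fin m → Matrix (Fin q) (Fin q) ℝ)
    (hS : ∀ l, (S l).PosDef)
    (hB : ∀ l, IsCovSel G (S l) (B l)) :
    ∀ Sig : Fin m → Matrix (Fin q) (Fin q) ℝ,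
      (∀ l, (Sig l).PosDef) →
      (∀ l i j, i ≠ j → ¬ G.Adj i j → (Sig l)⁻¹ i j = 0) →
      (∑ l, (((Sig l)⁻¹ * S l).trace + Real.log (Sig l).det) ≥
          ∑ l, (((B l)⁻¹ * S l).trace + Real.log (B l).det)) ∧
        (∑ l, (((B l)⁻¹ * S l).trace + Real.log (B l).det) =
          ∑ l : Fin m, ((q : ℝ) + Real.log (B l).det)) ∧
        (∑ l, (((Sig l)⁻¹ * S l).trace + Real.log (Sig l).det) =
            ∑ l, (((B l)⁻¹ * S l).trace + Real.log (B l).det) ↔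
          ∀ l, Sig l = B l) := by
  intro Sig hSig hSigG
  -- B agrees with S on the "graph support"
  have hagree : ∀ l i j, (i = j ∨ G.Adj i j) → S l j i = B l j i := by
    intro l i j hij
    have : j = i ∨ G.Adj j i := by
      rcases hij with h | h
      · exact Or.inl h.symm
      · exact Or.inr h.symm
    exact ((hB l).2.1 j i this).symm
  -- trace identities
  have htrB : ∀ l, ((B l)⁻¹ * S l).trace = ((B l)⁻¹ * B l).trace := by
    intro l
    apply CovSelAux.trace_congr
    intro i j hne
    apply hagree l i j
    by_contra hcon
    push_neg at hcon
    exact hne ((hB l).2.2 i j hcon.1 hcon.2)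
  have htrSig : ∀ l, ((Sig l)⁻¹ * S l).trace = ((Sig l)⁻¹ * B l).trace := by
    intro l
    apply CovSelAux.trace_congr
    intro i j hne
    apply hagree l i j
    by_contra hcon
    push_neg at hcon
    exact hne (hSigG l i j hcon.1 hcon.2)
  have htrBq : ∀ l, ((B l)⁻¹ * S l).trace = (q : ℝ) := by
    intro l
    rw [htrB l, Matrix.nonsing_inv_mul _ (hB l).1.det_pos.ne'.isUnit, Matrix.trace_one]
    simp
  -- per-l statements
  have hmain : ∀ l, (q : ℝ) + Real.log (B l).det ≤
      ((Sig l)⁻¹ * B l).trace + Real.log (Sig l).det ∧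
      (((Sig l)⁻¹ * B l).trace + Real.log (Sig l).det = (q : ℝ) + Real.log (B l).det ↔
        Sig l = B l) := fun l => CovSelAux.main_ineq (hSig l) (hB l).1
  have hgl : ∀ l, ((B l)⁻¹ * S l).trace + Real.log (B l).det =
      (q : ℝ) + Real.log (B l).det := by
    intro l; rw [htrBq l]
  have hfl : ∀ l, ((Sig l)⁻¹ * S l).trace + Real.log (Sig l).det =
      ((Sig l)⁻¹ * B l).trace + Real.log (Sig l).det := by
    intro l; rw [htrSig l]
  have hle : ∀ l : Fin m,
      ((B l)⁻¹ * S l).trace + Real.log (B l).det ≤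
        ((Sig l)⁻¹ * S l).trace + Real.log (Sig l).det := by
    intro l
    rw [hgl l, hfl l]
    exact (hmain l).1
  refine ⟨Finset.sum_le_sum fun l _ => hle l, Finset.sum_congr rfl fun l _ => hgl l, ?_⟩
  constructor
  · intro heq
    have hall := (Finset.sum_eq_sum_iff_of_le (fun l _ => hle l)).mp heq.symm
    intro l
    have h := hall l (Finset.mem_univ l)
    rw [hgl l, hfl l] at h
    exact (hmain l).2.mp h.symm
  · intro hall
    apply Finset.sum_congr rfl
    intro l _
    rw [hfl l, hgl l]
    exact ((hmain l).2.mpr (hall l))
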